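/- Let p be prime, q = p^r. For integers a, b with 0 ≤ a, b ≤ q-1 and a + p^l ≥ q (where l < r), if 0 ≤ b < a + p^l - q then every term C(u+b, a) with u ≡ 0 (mod p^l), max(a-b,0) ≤ u ≤ q-1-b, vanishes mod p; and if b ≥ a + p^l - q then ∑_{u ≡ 0 (mod p^l), max(a-b,0) ≤ u ≤ q-1-b} C(u+b, a) ≡ C(b, a + p^l - q) (mod p). -/

import Mathlib

open Finset

/-- Low base-`p` digits of `n % p ^ l` agree with those of `n`. -/
lemma digit_mod_pow (p l n i : ℕ) (hi : i < l) :
    (n % p ^ l) / p ^ i % p = n / p ^ i % p := by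
  have hil : i + (l - i) = l := by omega
  have h1 : n % p ^ l = n % (p ^ i * p ^ (l - i)) := by
    rw [← pow_add, hil]
  rw [h1, Nat.mod_mul_right_div_self]
  exact Nat.mod_mod_of_dvd _ (dvd_pow_self p (by omega))

/-- Lucas' theorem split at `p ^ l`, as an equality in `ZMod p`. -/
lemma lucas_pow (p : ℕ) (hp : p.Prime) (l n k : ℕ) :
    ((n.choose k : ℕ) : ZMod p) =
      (((n / p ^ l).choose (k / p ^ l) : ℕ) : ZMod p) *
      (((n % p ^ l).choose (k % p ^ l) : ℕ) : ZMod p) := by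
  haveI : Fact p.Prime := ⟨hp⟩
  have hpl : 0 < p ^ l := pow_pos hp.pos l
  have h1 := Choose.choose_modEq_choose_mul_prod_range_choose (n := n) (k := k) (p := p) l
  have h2 := Choose.choose_modEq_prod_range_choose (n := n % p ^ l) (k := k % p ^ l) (p := p)
      (Nat.mod_lt _ hpl) (Nat.mod_lt _ hpl)
  have e1 := (ZMod.intCast_eq_intCast_iff _ _ _).mpr h1
  have e2 := (ZMod.intCast_eq_intCast_iff _ _ _).mpr h2
  push_cast at e1 e2
  have hprod : (∏ i ∈ range l, (((n % p ^ l) / p ^ i % p).choose ((k % p ^ l) / p ^ i % p) : ZMod p))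
      = ∏ i ∈ range l, ((n / p ^ i % p).choose (k / p ^ i % p) : ZMod p) := by
    refine Finset.prod_congr rfl fun i hi => ?_
    rw [digit_mod_pow p l n i (mem_range.mp hi), digit_mod_pow p l k i (mem_range.mp hi)]
  rw [e1, e2, hprod]

/-- Let `p` be prime, `q = p^r`, `l < r`, `a, b ≤ q-1`, `a + p^l ≥ q`.
If `b < a + p^l - q` then every term `C(u+b, a)` with `p^l ∣ u`,
`max(a-b,0) ≤ u ≤ q-1-b`, vanishes mod `p`; and if `b ≥ a + p^l - q` then
`∑_{p^l ∣ u, max(a-b,0) ≤ u ≤ q-1-b} C(u+b, a) ≡ C(b, a + p^l - q) (mod p)`. -/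
theorem stmt_16 (p r l : ℕ) (hp : p.Prime) (hl : l < r) (q : ℕ) (hq : q = p ^ r)
    (a b : ℕ) (ha : a ≤ q - 1) (hb : b ≤ q - 1) (haq : q ≤ a + p ^ l) :
    (b < a + p ^ l - q →
      ∀ u : ℕ, p ^ l ∣ u → a - b ≤ u → u ≤ q - 1 - b → p ∣ (u + b).choose a) ∧
    (a + p ^ l - q ≤ b →
      (∑ u ∈ (Finset.Icc (a - b) (q - 1 - b)).filter (fun u => p ^ l ∣ u),
          ((u + b).choose a : ℤ))
        ≡ (b.choose (a + p ^ l - q) : ℤ) [ZMOD (p : ℤ)]) := by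
  haveI : Fact p.Prime := ⟨hp⟩
  have hp1 : 1 < p := hp.one_lt
  have hPpos : 0 < p ^ l := pow_pos hp.pos l
  set P := p ^ l with hP
  set M := p ^ (r - l) - 1 with hM
  have hQ2 : 2 ≤ p ^ (r - l) := le_trans hp1 (Nat.le_self_pow (by omega) p)
  have hrl : l + (r - l) = r := by omega
  have hM1 : M + 1 = p ^ (r - l) := by omega
  have hq2 : q = P * (M + 1) := by
    rw [hM1, hq, hP, ← pow_add, hrl]
  set N := P * M with hN
  have hqN : q = N + P := by rw [hq2, hN]; ring
  set c := a + P - q with hc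
  have hcP : c < P := by omega
  have haeq : a = c + N := by omega
  have haP : a % P = c := by rw [haeq, hN, Nat.add_mul_mod_self_left, Nat.mod_eq_of_lt hcP]
  have haD : a / P = M := by
    rw [haeq, hN, Nat.add_mul_div_left _ _ hPpos, Nat.div_eq_of_lt hcP, Nat.zero_add]
  constructor
  · intro hbc u hu h1 h2
    obtain ⟨t, rfl⟩ := hu
    have hblt : b < P := by omega
    have hmod : (P * t + b) % P = b := by rw [Nat.mul_add_mod, Nat.mod_eq_of_lt hblt]
    have hz0 : b.choose c = 0 := Nat.choose_eq_zero_of_lt (by omega)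
    have hz : (((P * t + b).choose a : ℕ) : ZMod p) = 0 := by
      rw [lucas_pow p hp l, ← hP, hmod, haP, hz0]
      simp
    exact (ZMod.natCast_eq_zero_iff _ _).mp hz
  · intro hcb
    rw [← ZMod.intCast_eq_intCast_iff]
    push_cast
    set D := b / P with hD
    set L := b % P with hL
    have hLP : L < P := Nat.mod_lt _ hPpos
    have hEL : P * D + L = b := Nat.div_add_mod b P
    set E := P * D with hE
    have hDM : D ≤ M := by
      have h1 : b < P * (M + 1) := by omega
      have h2 := Nat.div_lt_of_lt_mul h1
      rw [← hD] at h2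
      omega
    set u0 := P * (M - D) with hu0
    have hu0E : u0 + E = N := by
      rw [hu0, hE, hN, ← Nat.mul_add]
      congr 1; omega
    have key : ∀ u ∈ (Finset.Icc (a - b) (q - 1 - b)).filter (fun u => P ∣ u),
        (((u + b).choose a : ℕ) : ZMod p) = if u = u0 then ((L.choose c : ℕ) : ZMod p) else 0 := by
      intro u hu
      rw [mem_filter, mem_Icc] at hu
      obtain ⟨⟨hu1, hu2⟩, t, rfl⟩ := hu
      have hub : P * t + b ≤ q - 1 := by omega
      have htD : t + D ≤ M := by
        have h1 : P * t + b < P * (M + 1) := by omega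
        have h2 := Nat.div_lt_of_lt_mul h1
        rw [Nat.mul_add_div hPpos, ← hD] at h2
        omega
      have hmod : (P * t + b) % P = L := by rw [Nat.mul_add_mod, hL]
      have hdiv : (P * t + b) / P = t + D := by rw [Nat.mul_add_div hPpos, hD]
      rw [lucas_pow p hp l, ← hP, hmod, hdiv, haP, haD]
      by_cases ht : t + D = M
      · have : P * t = u0 := by rw [hu0]; congr 1; omega
        rw [if_pos this, ht, Nat.choose_self]
        simp
      · rw [if_neg, Nat.choose_eq_zero_of_lt (by omega)]
        · simp
        · intro h
          rw [hu0] at h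
          have : t = M - D := Nat.eq_of_mul_eq_mul_left hPpos h
          omega
    rw [Finset.sum_congr rfl key, Finset.sum_ite_eq']
    have hrhs : ((b.choose c : ℕ) : ZMod p) = ((L.choose c : ℕ) : ZMod p) := by
      rw [lucas_pow p hp l, ← hP, ← hD, ← hL, Nat.div_eq_of_lt hcP, Nat.mod_eq_of_lt hcP,
        Nat.choose_zero_right]
      simp
    rw [hrhs]
    by_cases hcL : c ≤ L
    · rw [if_pos]
      rw [mem_filter, mem_Icc]
      refine ⟨⟨by omega, by omega⟩, dvd_mul_right _ _⟩
    · rw [Nat.choose_eq_zero_of_lt (by omega)]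
      simp
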